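/- Let n ≥ 5 be an integer with n ≡ 2 (mod 3). Then the maximum of mis(G) over all simple graphs G on n vertices equals 2 · 3^{(n−2)/3}; that is, every graph G on n vertices satisfies mis(G) ≤ 2 · 3^{(n−2)/3}, and some graph on n vertices attains this value. -/

import Mathlib

/-- A finset of vertices is independent: no two of its elements are adjacent. -/
def IsIndepFinset {V : Type*} (G : SimpleGraph V) (s : Finset V) : Prop :=
  ∀ ⦃a⦄, a ∈ s → ∀ ⦃b⦄, b ∈ s → ¬ G.Adj a b

/-- A finset of vertices is a maximal independent set: it is independent and is not
properly contained in any other independent set. -/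
def IsMaxIndepFinset {V : Type*} (G : SimpleGraph V) (s : Finset V) : Prop :=
  IsIndepFinset G s ∧ ∀ t : Finset V, IsIndepFinset G t → s ⊆ t → s = t

/-- `mis G` is the number of maximal independent sets of `G`. -/
noncomputable def mis {V : Type*} (G : SimpleGraph V) : ℕ :=
  Set.ncard {s : Finset V | IsMaxIndepFinset G s}

/-- `G` has an induced triangle matching of size `t`: there are `t` pairwise disjoint
triples of vertices, each triple pairwise adjacent (a triangle), with no edges between
distinct triples (so the induced subgraph on their union is a disjoint union of `t`
triangles). -/
def HasInducedTriangleMatching {V : Type*} (G : SimpleGraph V) (t : ℕ) : Prop :=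
  ∃ f : Fin t → Finset V,
    (∀ i, (f i).card = 3) ∧
    (∀ i j, i ≠ j → Disjoint (f i) (f j)) ∧
    (∀ i, ∀ a ∈ f i, ∀ b ∈ f i, a ≠ b → G.Adj a b) ∧
    (∀ i j, i ≠ j → ∀ a ∈ f i, ∀ b ∈ f j, ¬ G.Adj a b)

/-- `G` has an induced matching of size `t`: there are `t` pairwise disjoint
pairs of vertices, each pair adjacent, with no edges between distinct pairs. -/
def HasInducedMatching {V : Type*} (G : SimpleGraph V) (t : ℕ) : Prop :=
  ∃ f : Fin t → Finset V,
    (∀ i, (f i).card = 2) ∧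
    (∀ i j, i ≠ j → Disjoint (f i) (f j)) ∧
    (∀ i, ∀ a ∈ f i, ∀ b ∈ f i, a ≠ b → G.Adj a b) ∧
    (∀ i j, i ≠ j → ∀ a ∈ f i, ∀ b ∈ f j, ¬ G.Adj a b)

open Finset


namespace MM

def g : ℕ → ℕ
  | 0 => 1
  | 1 => 1
  | 2 => 2
  | 3 => 3
  | 4 => 4
  | (n+5) => 3 * g (n+2)

lemma g_pos : ∀ n, 0 < g n
  | 0 => one_pos
  | 1 => one_pos
  | 2 => two_pos
  | 3 => by norm_num [g]
  | 4 => by norm_num [g]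
  | (n+5) => by have := g_pos (n+2); simp [g]; omega

lemma g_succ_le : ∀ n, g n ≤ g (n+1)
  | 0 => le_refl _
  | 1 => by norm_num [g]
  | 2 => by norm_num [g]
  | 3 => by norm_num [g]
  | 4 => by norm_num [g]
  | (n+5) => by
      have h := g_succ_le (n+2)
      have e : g (n+2+1) = g (n+3) := rfl
      show 3 * g (n+2) ≤ 3 * g (n+3)
      omega

lemma g_mono : Monotone g := monotone_nat_of_le_succ g_succ_le

lemma g_three : ∀ m, 3 * g m ≤ g (m+3)
  | 0 => by norm_num [g]
  | 1 => by norm_num [g]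
  | (m+2) => le_of_eq (by show 3 * g (m+2) = 3 * g (m+2); rfl)

lemma g_two : ∀ m, 2 * g m ≤ g (m+2)
  | 0 => le_refl _
  | 1 => by norm_num [g]
  | 2 => by norm_num [g]
  | 3 => by norm_num [g]
  | 4 => by norm_num [g]
  | (m+5) => by
      have h := g_two (m+2)
      show 2 * (3 * g (m+2)) ≤ 3 * g (m+4)
      have : g (m+2+2) = g (m+4) := rfl
      omega

lemma g_key : ∀ k n, 1 ≤ k → k ≤ n → k * g (n - k) ≤ g n := by
  intro k
  induction k using Nat.strong_induction_on with
  | _ k ih =>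
    intro n hk1 hkn
    match k, hk1 with
    | 1, _ => simpa using (g_mono (Nat.sub_le n 1))
    | 2, _ =>
        have := g_two (n-2)
        have h2 : n - 2 + 2 = n := by omega
        rw [h2] at this; exact this
    | 3, _ =>
        have := g_three (n-3)
        have h2 : n - 3 + 3 = n := by omega
        rw [h2] at this; exact this
    | 4, _ =>
        have h1 := g_two (n-4)
        have h2 := g_two (n-2)
        have e1 : n - 4 + 2 = n - 2 := by omega
        have e2 : n - 2 + 2 = n := by omega
        rw [e1] at h1; rw [e2] at h2
        omega
    | (m+5), _ =>
        have ihm : (m+2) * g ((n-3) - (m+2)) ≤ g (n-3) :=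
          ih (m+2) (by omega) (n-3) (by omega) (by omega)
        have h3 := g_three (n-3)
        have e3 : n - 3 + 3 = n := by omega
        rw [e3] at h3
        have e4 : (n-3) - (m+2) = n - (m+5) := by omega
        rw [e4] at ihm
        have hg := g_pos (n - (m+5))
        nlinarith [ihm, h3, hg]

lemma g_formula : ∀ m, g (3*m+2) = 2 * 3^m
  | 0 => rfl
  | (m+1) => by
      have h : 3*(m+1)+2 = (3*m) + 5 := by ring
      rw [h]
      show 3 * g (3*m+2) = 2*3^(m+1)
      rw [g_formula m]; ring

end MM

open Finset


open Classical in
lemma mis_eq_card {V : Type*} [Fintype V] (G : SimpleGraph V) :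
    mis G = (Finset.univ.filter (fun s => IsMaxIndepFinset G s)).card := by
  rw [mis, ← Set.ncard_coe_finset]
  congr 1
  ext s
  simp

lemma isMaxIndep_map_iff {V W : Type*} (e : V ≃ W) (H : SimpleGraph W) (s : Finset V) :
    IsMaxIndepFinset (H.comap e) s ↔ IsMaxIndepFinset H (s.map e.toEmbedding) := by
  constructor
  · rintro ⟨hind, hmax⟩
    refine ⟨?_, ?_⟩
    · intro a ha b hb hadj
      simp only [Finset.mem_map, Equiv.coe_toEmbedding] at ha hb
      obtain ⟨a', ha', rfl⟩ := ha
      obtain ⟨b', hb', rfl⟩ := hb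
      exact hind ha' hb' hadj
    · intro t ht hst
      have hind' : IsIndepFinset (H.comap e) (t.map e.symm.toEmbedding) := by
        intro a ha b hb hadj
        simp only [Finset.mem_map, Equiv.coe_toEmbedding] at ha hb
        obtain ⟨a', ha', rfl⟩ := ha
        obtain ⟨b', hb', rfl⟩ := hb
        simp only [SimpleGraph.comap_adj, Equiv.apply_symm_apply] at hadj
        exact ht ha' hb' hadj
      have hsub : s ⊆ t.map e.symm.toEmbedding := by
        intro x hx
        have : e x ∈ t := hst (Finset.mem_map_of_mem _ hx)
        simpa using Finset.mem_map_of_mem e.symm.toEmbedding this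
      have := hmax _ hind' hsub
      rw [this, Finset.map_map]
      have : (e.symm.toEmbedding.trans e.toEmbedding) = Function.Embedding.refl W := by
        ext x; simp
      rw [this, Finset.map_refl]
  · rintro ⟨hind, hmax⟩
    refine ⟨?_, ?_⟩
    · intro a ha b hb hadj
      exact hind (Finset.mem_map_of_mem _ ha) (Finset.mem_map_of_mem _ hb) hadj
    · intro t ht hst
      have hind' : IsIndepFinset H (t.map e.toEmbedding) := by
        intro a ha b hb hadj
        simp only [Finset.mem_map, Equiv.coe_toEmbedding] at ha hb
        obtain ⟨a', ha', rfl⟩ := ha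
        obtain ⟨b', hb', rfl⟩ := hb
        exact ht ha' hb' hadj
      have := hmax _ hind' (Finset.map_subset_map.mpr hst)
      exact Finset.map_injective _ this

lemma mis_comap {V W : Type*} (e : V ≃ W) (H : SimpleGraph W) :
    mis (H.comap e) = mis H := by
  have himg : (fun s : Finset V => s.map e.toEmbedding) '' {s | IsMaxIndepFinset (H.comap e) s}
      = {s | IsMaxIndepFinset H s} := by
    ext t
    constructor
    · rintro ⟨s, hs, rfl⟩
      exact (isMaxIndep_map_iff e H s).mp hs
    · intro ht
      refine ⟨t.map e.symm.toEmbedding, ?_, ?_⟩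
      · rw [Set.mem_setOf_eq, isMaxIndep_map_iff e H]
        have : (t.map e.symm.toEmbedding).map e.toEmbedding = t := by
          rw [Finset.map_map]
          have : (e.symm.toEmbedding.trans e.toEmbedding) = Function.Embedding.refl W := by
            ext x; simp
          rw [this, Finset.map_refl]
        rwa [this]
      · show (t.map e.symm.toEmbedding).map e.toEmbedding = t
        rw [Finset.map_map]
        have : (e.symm.toEmbedding.trans e.toEmbedding) = Function.Embedding.refl W := by
          ext x; simp
        rw [this, Finset.map_refl]
  rw [mis, mis, ← himg, Set.ncard_image_of_injective _ (fun s t h => Finset.map_injective _ h)]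

abbrev BW (t : ℕ) := Fin 2 ⊕ (Fin t × Fin 3)

def blk {t : ℕ} : BW t → Option (Fin t) := Sum.elim (fun _ => none) (fun p => some p.1)

def blockGraph (t : ℕ) : SimpleGraph (BW t) where
  Adj x y := x ≠ y ∧ blk x = blk y
  symm := ⟨fun x y (h : x ≠ y ∧ blk x = blk y) => (⟨h.1.symm, h.2.symm⟩ : y ≠ x ∧ blk y = blk x)⟩
  loopless := ⟨fun x (h : x ≠ x ∧ blk x = blk x) => h.1 rfl⟩

def Psi (t : ℕ) : Fin 2 × (Fin t → Fin 3) → Finset (BW t) :=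
  fun q => insert (Sum.inl q.1) (Finset.univ.image (fun i => Sum.inr (i, q.2 i)))

lemma mem_Psi {t : ℕ} (q) (x : BW t) :
    x ∈ Psi t q ↔ x = Sum.inl q.1 ∨ ∃ i, x = Sum.inr (i, q.2 i) := by
  simp [Psi, eq_comm]

lemma Psi_maxIndep {t : ℕ} (q) : IsMaxIndepFinset (blockGraph t) (Psi t q) := by
  obtain ⟨a, f⟩ := q
  constructor
  · intro x hx y hy hadj
    obtain ⟨hne, hblk⟩ := hadj
    rw [mem_Psi] at hx hy
    rcases hx with rfl | ⟨i, rfl⟩ <;> rcases hy with rfl | ⟨j, rfl⟩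
    · exact hne rfl
    · simp [blk] at hblk
    · simp [blk] at hblk
    · simp [blk] at hblk
      subst hblk
      exact hne rfl
  · intro u hu hsub
    refine Finset.Subset.antisymm hsub (fun x hx => ?_)
    rw [mem_Psi]
    match x with
    | Sum.inl a' =>
        left
        have h1 : Sum.inl a ∈ u := hsub (by rw [mem_Psi]; left; rfl)
        by_contra hne
        exact hu hx h1 ⟨by simpa using fun h => hne (by rw [h]), rfl⟩
    | Sum.inr (i, c) =>
        right
        refine ⟨i, ?_⟩
        have h1 : Sum.inr (i, f i) ∈ u := hsub (by rw [mem_Psi]; right; exact ⟨i, rfl⟩)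
        by_contra hne
        refine hu hx h1 ⟨?_, rfl⟩
        intro h
        exact hne h

lemma maxIndep_mem_range {t : ℕ} (s : Finset (BW t)) (hs : IsMaxIndepFinset (blockGraph t) s) :
    ∃ q, s = Psi t q := by
  obtain ⟨hind, hmax⟩ := hs
  have hA : ∃ a : Fin 2, Sum.inl a ∈ s := by
    by_contra h
    push_neg at h
    have hind' : IsIndepFinset (blockGraph t) (insert (Sum.inl 0) s) := by
      intro x hx y hy hadj
      obtain ⟨hne, hblk⟩ := hadj
      rw [Finset.mem_insert] at hx hy
      rcases hx with rfl | hx <;> rcases hy with rfl | hy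
      · exact hne rfl
      · match y, hy with
        | Sum.inl a', hy => exact h a' hy
        | Sum.inr p, hy => simp [blk] at hblk
      · match x, hx with
        | Sum.inl a', hx => exact h a' hx
        | Sum.inr p, hx => simp [blk] at hblk
      · exact hind hx hy ⟨hne, hblk⟩
    have := hmax _ hind' (Finset.subset_insert _ _)
    exact h 0 (this ▸ Finset.mem_insert_self _ _)
  have hB : ∀ i : Fin t, ∃ c : Fin 3, Sum.inr (i, c) ∈ s := by
    intro i
    by_contra h
    push_neg at h
    have hind' : IsIndepFinset (blockGraph t) (insert (Sum.inr (i, 0)) s) := by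
      intro x hx y hy hadj
      obtain ⟨hne, hblk⟩ := hadj
      rw [Finset.mem_insert] at hx hy
      rcases hx with rfl | hx <;> rcases hy with rfl | hy
      · exact hne rfl
      · match y, hy with
        | Sum.inl a', hy => simp [blk] at hblk
        | Sum.inr (j, c), hy =>
            simp [blk] at hblk
            exact h c (hblk ▸ hy)
      · match x, hx with
        | Sum.inl a', hx => simp [blk] at hblk
        | Sum.inr (j, c), hx =>
            simp [blk] at hblk
            exact h c (hblk ▸ hx)
      · exact hind hx hy ⟨hne, hblk⟩
    have := hmax _ hind' (Finset.subset_insert _ _)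
    exact h 0 (this ▸ Finset.mem_insert_self _ _)
  obtain ⟨a, ha⟩ := hA
  choose f hf using hB
  refine ⟨(a, f), ?_⟩
  refine Finset.Subset.antisymm (fun x hx => ?_) (fun x hx => ?_)
  · rw [mem_Psi]
    match x with
    | Sum.inl a' =>
        left
        by_contra hne
        exact hind hx ha ⟨by simpa using fun h => hne (by rw [h]), rfl⟩
    | Sum.inr (i, c) =>
        right
        refine ⟨i, ?_⟩
        by_contra hne
        exact hind hx (hf i) ⟨fun h => hne h, rfl⟩
  · rw [mem_Psi] at hx
    rcases hx with rfl | ⟨i, rfl⟩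
    · exact ha
    · exact hf i

lemma Psi_injective (t : ℕ) : Function.Injective (Psi t) := by
  rintro ⟨a, f⟩ ⟨a', f'⟩ h
  have h1 : Sum.inl a ∈ Psi t (a', f') := h ▸ (by rw [mem_Psi]; left; rfl)
  rw [mem_Psi] at h1
  rcases h1 with h1 | ⟨i, h1⟩
  · simp at h1
    subst h1
    have h2 : ∀ i, f i = f' i := by
      intro i
      have : Sum.inr (i, f i) ∈ Psi t (a, f') := h ▸ (by rw [mem_Psi]; right; exact ⟨i, rfl⟩)
      rw [mem_Psi] at this
      rcases this with h3 | ⟨j, h3⟩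
      · simp at h3
      · simp at h3
        obtain ⟨rfl, h4⟩ := h3
        exact h4
    exact Prod.ext rfl (funext h2)
  · simp at h1

lemma mis_blockGraph (t : ℕ) : mis (blockGraph t) = 2 * 3 ^ t := by
  have hset : {s : Finset (BW t) | IsMaxIndepFinset (blockGraph t) s} = Set.range (Psi t) := by
    ext s
    constructor
    · intro hs
      obtain ⟨q, hq⟩ := maxIndep_mem_range s hs
      exact ⟨q, hq.symm⟩
    · rintro ⟨q, rfl⟩
      exact Psi_maxIndep q
  rw [mis, hset, ← Set.image_univ, Set.ncard_image_of_injective _ (Psi_injective t),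
    Set.ncard_univ, Nat.card_eq_fintype_card]
  simp [Fintype.card_fun]
open Classical in
lemma card_filter_mem_le {V : Type*} [Fintype V] (G : SimpleGraph V) (u : V) :
    ((univ.filter (fun s => IsMaxIndepFinset G s)).filter (fun s => u ∈ s)).card
      ≤ mis (G.induce {x : V | ¬(x = u ∨ G.Adj u x)}) := by
  classical
  set s0 : Set V := {x : V | ¬(x = u ∨ G.Adj u x)} with hs0
  rw [mis_eq_card]
  set F : Finset V → Finset ↥s0 := fun s => (s.erase u).subtype (· ∈ s0) with hF
  have hmemF : ∀ (s : Finset V) (a : ↥s0), a ∈ F s ↔ (a : V) ∈ s.erase u := by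
    intro s a; simp [hF, Finset.mem_subtype]
  have hrecon : ∀ s : Finset V, IsMaxIndepFinset G s → u ∈ s →
      ∀ x ∈ s, x ≠ u → x ∈ s0 := by
    intro s hs hus x hx hxu
    simp only [hs0, Set.mem_setOf_eq]
    push_neg
    exact ⟨hxu, hs.1 hus hx⟩
  apply Finset.card_le_card_of_injOn F
  · intro s hs
    simp only [Finset.mem_coe, mem_filter, mem_univ, true_and] at hs
    obtain ⟨hmis, hus⟩ := hs
    obtain ⟨hind, hmax⟩ := hmis
    simp only [Finset.mem_coe, mem_filter, mem_univ, true_and]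
    constructor
    · intro a ha b hb hadj
      rw [hmemF] at ha hb
      have : G.Adj (a : V) (b : V) := hadj
      exact hind (Finset.mem_of_mem_erase ha) (Finset.mem_of_mem_erase hb) this
    · intro t ht hsubt
      set T : Finset V := insert u (t.map (Function.Embedding.subtype (· ∈ s0))) with hT
      have hmemT : ∀ x : V, x ∈ T ↔ x = u ∨ ∃ y ∈ t, (y : V) = x := by
        intro x; simp [hT]
      have hindT : IsIndepFinset G T := by
        intro a ha b hb hadj
        rw [hmemT] at ha hb
        rcases ha with rfl | ⟨y, hy, rfl⟩ <;> rcases hb with rfl | ⟨z, hz, rfl⟩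
        · exact G.loopless.irrefl _ hadj
        · exact z.2 (Or.inr hadj)
        · exact y.2 (Or.inr hadj.symm)
        · exact ht hy hz hadj
      have hsubT : s ⊆ T := by
        intro x hx
        rw [hmemT]
        by_cases hxu : x = u
        · exact Or.inl hxu
        · have hx0 : x ∈ s0 := hrecon s ⟨hind, hmax⟩ hus x hx hxu
          refine Or.inr ⟨⟨x, hx0⟩, ?_, rfl⟩
          exact hsubt (by rw [hmemF]; exact Finset.mem_erase.mpr ⟨hxu, hx⟩)
      have hST := hmax T hindT hsubT
      refine Finset.Subset.antisymm hsubt (fun y hy => ?_)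
      rw [hmemF]
      have hyT : (y : V) ∈ T := by rw [hmemT]; exact Or.inr ⟨y, hy, rfl⟩
      have hys : (y : V) ∈ s := hST ▸ hyT
      have hyu : (y : V) ≠ u := by
        intro h
        exact y.2 (Or.inl h)
      exact Finset.mem_erase.mpr ⟨hyu, hys⟩
  · intro s hs s' hs' hFeq
    simp only [Finset.coe_filter, Set.mem_setOf_eq, mem_univ, true_and, mem_filter] at hs hs'
    have key : ∀ a b : Finset V, (IsMaxIndepFinset G a ∧ u ∈ a) →
        (IsMaxIndepFinset G b ∧ u ∈ b) → F a = F b → a ⊆ b := by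
      intro a b ⟨ha, hua⟩ ⟨hb, hub⟩ heq x hx
      by_cases hxu : x = u
      · exact hxu ▸ hub
      · have hx0 : x ∈ s0 := hrecon a ha hua x hx hxu
        have : (⟨x, hx0⟩ : ↥s0) ∈ F a := by rw [hmemF]; exact Finset.mem_erase.mpr ⟨hxu, hx⟩
        rw [heq, hmemF] at this
        exact Finset.mem_of_mem_erase this
    exact Finset.Subset.antisymm (key s s' hs hs' hFeq) (key s' s hs' hs hFeq.symm)


open Classical in
lemma card_subtype_compl_closed {V : Type*} [Fintype V] (G : SimpleGraph V) (u : V) :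
    Fintype.card {x : V // ¬(x = u ∨ G.Adj u x)} = Fintype.card V - 1 - G.degree u := by
  classical
  rw [Fintype.card_subtype]
  have h1 : univ.filter (fun x => x = u ∨ G.Adj u x) = insert u (G.neighborFinset u) := by
    ext x
    simp [SimpleGraph.mem_neighborFinset, eq_comm, SimpleGraph.adj_comm]
  have h2 : (univ.filter (fun x => ¬(x = u ∨ G.Adj u x))).card
      = Fintype.card V - (univ.filter (fun x => x = u ∨ G.Adj u x)).card := by
    rw [Finset.filter_not, Finset.card_sdiff_of_subset (Finset.filter_subset _ _), Finset.card_univ]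
  rw [h2, h1, Finset.card_insert_of_notMem (by simp), SimpleGraph.card_neighborFinset_eq_degree]
  omega
open MM in
lemma mis_le_g : ∀ (n : ℕ) (V : Type) [Fintype V] (G : SimpleGraph V),
    Fintype.card V = n → mis G ≤ g n := by
  intro n
  induction n using Nat.strong_induction_on with
  | _ n ih =>
    intro V _ G hcard
    classical
    rcases Nat.eq_zero_or_pos n with rfl | hn
    · have hempty : IsEmpty V := by
        rw [← Fintype.card_eq_zero_iff, hcard]
      rw [mis_eq_card]
      have : (univ.filter (fun s => IsMaxIndepFinset G s)) ⊆ {∅} := by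
        intro s _
        simp only [Finset.mem_singleton]
        exact Finset.eq_empty_of_isEmpty s
      calc (univ.filter (fun s => IsMaxIndepFinset G s)).card
          ≤ ({∅} : Finset (Finset V)).card := Finset.card_le_card this
        _ = 1 := Finset.card_singleton _
        _ = g 0 := rfl
    · have hne : Nonempty V := Fintype.card_pos_iff.mp (by omega)
      obtain ⟨v, -, hv⟩ := Finset.exists_min_image Finset.univ (fun x => G.degree x)
        ⟨Classical.arbitrary V, mem_univ _⟩
      set d := G.degree v with hd
      set C : Finset V := insert v (G.neighborFinset v) with hC
      have hCcard : C.card = d + 1 := by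
        rw [hC, Finset.card_insert_of_notMem (by simp), SimpleGraph.card_neighborFinset_eq_degree]
      set M := univ.filter (fun s => IsMaxIndepFinset G s) with hM
      have hsub : M ⊆ C.biUnion (fun u => M.filter (fun s => u ∈ s)) := by
        intro s hs
        simp only [hM, mem_filter, mem_univ, true_and] at hs
        obtain ⟨hind, hmax⟩ := hs
        have hex : ∃ u ∈ C, u ∈ s := by
          by_contra h
          push_neg at h
          have hnb : ∀ x : V, G.Adj v x → x ∈ C := by
            intro x hx
            rw [hC]
            exact Finset.mem_insert_of_mem (by simp [SimpleGraph.mem_neighborFinset]; exact hx)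
          have hind' : IsIndepFinset G (insert v s) := by
            intro a ha b hb hadj
            rw [Finset.mem_insert] at ha hb
            rcases ha with rfl | ha <;> rcases hb with rfl | hb
            · exact G.loopless.irrefl _ hadj
            · exact h b (hnb b hadj) hb
            · exact h a (hnb a hadj.symm) ha
            · exact hind ha hb hadj
          have heq := hmax _ hind' (Finset.subset_insert _ _)
          have hvC : v ∈ C := by rw [hC]; exact Finset.mem_insert_self _ _
          exact h v hvC (heq ▸ Finset.mem_insert_self _ _)
        obtain ⟨u, huC, hus⟩ := hex
        refine Finset.mem_biUnion.mpr ⟨u, huC, ?_⟩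
        simp only [hM, mem_filter, mem_univ, true_and]
        exact ⟨⟨hind, hmax⟩, hus⟩
      have h2 : ∀ u ∈ C, (M.filter (fun s => u ∈ s)).card ≤ g (n - 1 - d) := by
        intro u _
        have hdu : d ≤ G.degree u := hv u (mem_univ u)
        have step := card_filter_mem_le G u
        have hcard' : Fintype.card {x : V // ¬(x = u ∨ G.Adj u x)} = n - 1 - G.degree u := by
          rw [card_subtype_compl_closed, hcard]
        have hlt : n - 1 - G.degree u < n := by omega
        have hih := ih (n - 1 - G.degree u) hlt _ (G.induce {x : V | ¬(x = u ∨ G.Adj u x)}) hcard'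
        calc (M.filter (fun s => u ∈ s)).card
            ≤ mis (G.induce {x : V | ¬(x = u ∨ G.Adj u x)}) := step
          _ ≤ g (n - 1 - G.degree u) := hih
          _ ≤ g (n - 1 - d) := g_mono (by omega)
      have h1 : M.card ≤ ∑ u ∈ C, (M.filter (fun s => u ∈ s)).card :=
        (Finset.card_le_card hsub).trans (Finset.card_biUnion_le)
      have h3 : ∑ u ∈ C, (M.filter (fun s => u ∈ s)).card ≤ (d + 1) * g (n - 1 - d) := by
        calc ∑ u ∈ C, (M.filter (fun s => u ∈ s)).card
            ≤ ∑ _u ∈ C, g (n - 1 - d) := Finset.sum_le_sum h2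
          _ = (d + 1) * g (n - 1 - d) := by rw [Finset.sum_const, hCcard, smul_eq_mul]
      have hdeg : d + 1 ≤ n := by
        have := SimpleGraph.degree_lt_card_verts (G := G) v
        omega
      have h4 : (d + 1) * g (n - (d + 1)) ≤ g n := g_key (d + 1) n (by omega) hdeg
      have he : n - 1 - d = n - (d + 1) := by omega
      rw [he] at h3
      have hfin : mis G = M.card := by rw [mis_eq_card, hM]
      omega

theorem moon_moser_two_mod_three (n : ℕ) (hn : 5 ≤ n) (hmod : n % 3 = 2) :
    (∀ G : SimpleGraph (Fin n), mis G ≤ 2 * 3 ^ ((n - 2) / 3)) ∧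
    (∃ G : SimpleGraph (Fin n), mis G = 2 * 3 ^ ((n - 2) / 3)) := by
  set t := (n - 2) / 3 with ht
  have hnt : n = 3 * t + 2 := by omega
  constructor
  · intro G
    have h := mis_le_g n (Fin n) G (by simp)
    calc mis G ≤ MM.g n := h
      _ = 2 * 3 ^ t := by rw [hnt, MM.g_formula]
  · have hcard : Fintype.card (Fin n) = Fintype.card (BW t) := by
      simp [BW]
      omega
    refine ⟨(blockGraph t).comap (Fintype.equivOfCardEq hcard), ?_⟩
    rw [mis_comap, mis_blockGraph]
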